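/- Let n ≥ 2, k = n−1, and m, p : [n] → ℕ. The following are equivalent: (a) there exists a family of nonnegative integers (γ_{i,j})_{i≠j∈[n]} with Σ_{j≠i} γ_{i,j} = m_i for every i ∈ [n] and m_i ≤ Σ_{j≠i} min( p_j , γ_{i,j} ) for every i ∈ [n]; (b) m_i ≤ Σ_{j≠i} p_j for every i ∈ [n]. Consequently, when k = n−1 the smallest code redundancy Σ_j p_j subject to the minimum-update-bandwidth constraint (a) equals the minimum code redundancy subject only to (b). -/

import Mathlib

/-- Greedy splitting lemma: any `t` below the sum of `p` over `s` can be written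
as a sum of a pointwise-bounded function. -/
lemma split_sum {α : Type*} [DecidableEq α] (s : Finset α) (p : α → ℕ) :
    ∀ t : ℕ, t ≤ ∑ j ∈ s, p j →
      ∃ γ : α → ℕ, (∀ j ∈ s, γ j ≤ p j) ∧ ∑ j ∈ s, γ j = t := by
  classical
  induction s using Finset.induction with
  | empty =>
    intro t ht
    simp at ht
    exact ⟨fun _ => 0, by simp, by simp [ht]⟩
  | insert _ _ ha ih =>
    rename_i a s
    intro t ht
    rw [Finset.sum_insert ha] at ht
    obtain ⟨γ', hγ'1, hγ'2⟩ := ih (t - min t (p a)) (by omega)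
    refine ⟨fun j => if j = a then min t (p a) else γ' j, ?_, ?_⟩
    · intro j hj
      by_cases h : j = a
      · simp [h]
      · simp [h]
        exact hγ'1 j (Finset.mem_of_mem_insert_of_ne hj h)
    · rw [Finset.sum_insert ha]
      rw [if_pos rfl]
      rw [Finset.sum_congr rfl (fun j hj => if_neg (by rintro rfl; exact ha hj)), hγ'2]
      omega

/-- When `k = n-1`, the minimum-update-bandwidth feasibility constraints on `p`
(existence of `γ` with `∑_{j≠i} γ i j = m i` and `m i ≤ ∑_{j≠i} min (p j) (γ i j)`)
are equivalent to the plain redundancy constraints `m i ≤ ∑_{j≠i} p j`. -/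
theorem stmt7 (n : ℕ) (hn : 2 ≤ n) (m p : Fin n → ℕ) :
    (∃ γ : Fin n → Fin n → ℕ,
        (∀ i : Fin n, ∑ j ∈ Finset.univ.erase i, γ i j = m i) ∧
        (∀ i : Fin n, m i ≤ ∑ j ∈ Finset.univ.erase i, min (p j) (γ i j)))
    ↔ (∀ i : Fin n, m i ≤ ∑ j ∈ Finset.univ.erase i, p j) := by
  constructor
  · rintro ⟨γ, hsum, hmin⟩ i
    calc m i ≤ ∑ j ∈ Finset.univ.erase i, min (p j) (γ i j) := hmin i
      _ ≤ ∑ j ∈ Finset.univ.erase i, p j :=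
        Finset.sum_le_sum fun j _ => min_le_left _ _
  · intro h
    have H : ∀ i : Fin n, ∃ γi : Fin n → ℕ,
        (∀ j ∈ Finset.univ.erase i, γi j ≤ p j) ∧
        ∑ j ∈ Finset.univ.erase i, γi j = m i :=
      fun i => split_sum _ p (m i) (h i)
    choose γ hle hsum using H
    refine ⟨γ, hsum, fun i => ?_⟩
    have : ∑ j ∈ Finset.univ.erase i, min (p j) (γ i j)
        = ∑ j ∈ Finset.univ.erase i, γ i j :=
      Finset.sum_congr rfl fun j hj => min_eq_right (hle i j hj)
    rw [this, hsum]
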